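/- Let s(z) = ∫ (x − z)^{−1} d(semicircle)(x) for z ∈ ℂ with Im z > 0. Then s is complex-differentiable at every point of the upper half-plane, and for all z₁, z₂ with Im z₁ > 0, Im z₂ > 0 and z₁ ≠ z₂, one has s(z₁) ≠ s(z₂), s(z₁)² ≠ 1, s(z₂)² ≠ 1, s(z₁) s(z₂) ≠ 1, and s′(z₁) s′(z₂) / ( s(z₁) − s(z₂) )² − 1 / ( z₁ − z₂ )² = s(z₁)² s(z₂)² / ( ( s(z₁)² − 1 ) ( s(z₂)² − 1 ) ( s(z₁) s(z₂) − 1 )² ). -/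

import Mathlib

open MeasureTheory ProbabilityTheory Matrix Filter
open scoped ENNReal NNReal BigOperators Topology

noncomputable section

/-- The semicircle law on ℝ. -/
def semicircle : Measure ℝ :=
  volume.withDensity fun x =>
    ENNReal.ofReal (Set.indicator (Set.Icc (-2 : ℝ) 2)
      (fun y => Real.sqrt (4 - y ^ 2) / (2 * Real.pi)) x)

/-- The limiting law F^c. -/
def Fc (c : ℝ) : Measure ℝ :=
  (volume.withDensity fun x =>
    ENNReal.ofReal (Set.indicator (Set.Icc ((Real.sqrt c)⁻¹ - 2) ((Real.sqrt c)⁻¹ + 2))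
      (fun y => Real.sqrt (4 - y ^ 2 - c⁻¹ + 2 * y * (Real.sqrt c)⁻¹) /
        (2 * Real.pi * (1 + y * (Real.sqrt c)⁻¹))) x))
  + (if c ≤ 1 then ENNReal.ofReal (1 - c) • Measure.dirac (-(Real.sqrt c)) else 0)

/-- Centering matrix Φ = I - (1/n) 1 1ᵀ. -/
def Phi (n : ℕ) : Matrix (Fin n) (Fin n) ℝ :=
  1 - (n : ℝ)⁻¹ • Matrix.of fun _ _ => (1 : ℝ)

/-- Sample covariance S_n = (1/(n-1)) Y Φ Yᵀ. -/
def sampleCov {p n : ℕ} (Y : Matrix (Fin p) (Fin n) ℝ) : Matrix (Fin p) (Fin p) ℝ :=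
  ((n : ℝ) - 1)⁻¹ • (Y * Phi n * Yᵀ)

/-- D_n = diag(1/s_11, ..., 1/s_pp). -/
def Dmat {p n : ℕ} (Y : Matrix (Fin p) (Fin n) ℝ) : Matrix (Fin p) (Fin p) ℝ :=
  Matrix.diagonal fun k => (sampleCov Y k k)⁻¹

/-- Renormalized sample correlation matrix B_n. -/
def Bmat {p n : ℕ} (Y : Matrix (Fin p) (Fin n) ℝ) : Matrix (Fin n) (Fin n) ℝ :=
  Real.sqrt ((p : ℝ) / ((n : ℝ) - 1)) •
    ((p : ℝ)⁻¹ • (Phi n * Yᵀ * Dmat Y * Y * Phi n) - Phi n)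

/-- Empirical spectral distribution: uniform measure on roots of the char. polynomial. -/
def ESD {n : ℕ} (M : Matrix (Fin n) (Fin n) ℝ) : Measure ℝ :=
  (n : ℝ≥0∞)⁻¹ • (Multiset.map (fun x => Measure.dirac x) M.charpoly.roots).sum

/-- The largest eigenvalue of a (symmetric) matrix. -/
def maxEig {n : ℕ} (M : Matrix (Fin n) (Fin n) ℝ) : ℝ :=
  sSup (spectrum ℝ M)

/-- The data matrix Y = μ 1ᵀ + Σ^{1/2} X built from an array. -/
def Ymat {pn n : ℕ} (μv : Fin pn → ℝ) (σ : Fin pn → ℝ) (xv : Fin pn → Fin n → ℝ) :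
    Matrix (Fin pn) (Fin n) ℝ :=
  Matrix.of fun i j => μv i + Real.sqrt (σ i) * xv i j

/-- Stieltjes transform of the semicircle law, as a function on `ℂ`. -/
def scS : ℂ → ℂ := fun z => ∫ x, ((x : ℂ) - z)⁻¹ ∂semicircle

open Complex Set intervalIntegral

lemma ind_meas : Measurable fun x : ℝ => Set.indicator (Set.Icc (-2:ℝ) 2)
    (fun y => Real.sqrt (4 - y^2) / (2*Real.pi)) x := by
  apply Measurable.indicator
  · fun_prop
  · exact measurableSet_Icc

lemma ind_nonneg (x : ℝ) : 0 ≤ Set.indicator (Set.Icc (-2:ℝ) 2)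
    (fun y => Real.sqrt (4 - y^2) / (2*Real.pi)) x := by
  apply Set.indicator_nonneg
  intro y _
  positivity

instance : IsFiniteMeasure semicircle := by
  constructor
  rw [semicircle, withDensity_apply _ MeasurableSet.univ, Measure.restrict_univ]
  calc ∫⁻ x, ENNReal.ofReal (Set.indicator (Set.Icc (-2:ℝ) 2)
        (fun y => Real.sqrt (4 - y^2) / (2*Real.pi)) x) ∂volume
      ≤ ∫⁻ _x in Set.Icc (-2:ℝ) 2, ENNReal.ofReal 1 ∂volume := by
        rw [← lintegral_indicator measurableSet_Icc]
        apply lintegral_mono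
        intro x
        by_cases hx : x ∈ Set.Icc (-2:ℝ) 2
        · simp only [Set.indicator_of_mem hx]
          apply ENNReal.ofReal_le_ofReal
          rw [div_le_iff₀ (by positivity)]
          have h1 : Real.sqrt (4 - x^2) ≤ 2 := by
            rw [show (2:ℝ) = Real.sqrt 4 by rw [show (4:ℝ) = 2^2 by norm_num, Real.sqrt_sq]; norm_num]
            apply Real.sqrt_le_sqrt
            nlinarith
          nlinarith [Real.pi_gt_three]
        · simp [Set.indicator_of_notMem hx]
    _ < ⊤ := by
        rw [setLIntegral_const]
        simp only [Real.volume_Icc, ENNReal.ofReal_one, one_mul]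
        exact ENNReal.ofReal_lt_top

lemma sc_integral (f : ℝ → ℂ) :
    ∫ x, f x ∂semicircle
      = ∫ x in (-2:ℝ)..2, (Real.sqrt (4 - x^2) / (2*Real.pi)) • f x := by
  have h1 : semicircle = volume.withDensity fun x =>
      ((fun x : ℝ => Real.toNNReal (Set.indicator (Set.Icc (-2:ℝ) 2)
        (fun y => Real.sqrt (4 - y^2) / (2*Real.pi)) x)) x : ℝ≥0∞) := by
    rfl
  rw [h1, integral_withDensity_eq_integral_smul (by exact ind_meas.real_toNNReal) f]
  have h2 : ∀ x : ℝ, (Real.toNNReal (Set.indicator (Set.Icc (-2:ℝ) 2)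
      (fun y => Real.sqrt (4 - y^2) / (2*Real.pi)) x)) • f x
      = Set.indicator (Set.Icc (-2:ℝ) 2)
          (fun x => (Real.sqrt (4 - x^2) / (2*Real.pi)) • f x) x := by
    intro x
    by_cases hx : x ∈ Set.Icc (-2:ℝ) 2
    · simp only [Set.indicator_of_mem hx]
      rw [NNReal.smul_def, Real.coe_toNNReal _ (by positivity)]
    · simp [Set.indicator_of_notMem hx]
  simp_rw [h2]
  rw [MeasureTheory.integral_indicator measurableSet_Icc, MeasureTheory.integral_Icc_eq_integral_Ioc,
    intervalIntegral.integral_of_le (by norm_num : (-2:ℝ) ≤ 2)]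

lemma sqrt4_pos {x : ℝ} (hx : x ∈ Set.Ioo (-2:ℝ) 2) : 0 < Real.sqrt (4 - x^2) := by
  apply Real.sqrt_pos.2; nlinarith [hx.1, hx.2]

lemma arcsin_deriv {x : ℝ} (hx : x ∈ Set.Ioo (-2:ℝ) 2) :
    HasDerivAt (fun y : ℝ => Real.arcsin (y/2)) ((Real.sqrt (4 - x^2))⁻¹) x := by
  have h1 : x/2 ≠ -1 := by intro h; have := hx.1; nlinarith [h]
  have h2 : x/2 ≠ 1 := by intro h; have := hx.2; nlinarith [h]
  have := (Real.hasDerivAt_arcsin h1 h2).comp x ((hasDerivAt_id x).div_const 2)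
  refine this.congr_deriv ?_
  have hsq : Real.sqrt (1 - (x/2)^2) = Real.sqrt (4 - x^2) / 2 := by
    rw [show (1 - (x/2)^2) = (4-x^2)/4 by ring, Real.sqrt_div (by nlinarith [hx.1, hx.2]),
      show (4:ℝ) = 2^2 by norm_num, Real.sqrt_sq (by norm_num)]
  rw [hsq]
  have := sqrt4_pos hx
  field_simp

lemma int_inv_sqrt : IntervalIntegrable (fun x : ℝ => (Real.sqrt (4 - x^2))⁻¹) volume (-2) 2 := by
  apply intervalIntegrable_deriv_of_nonneg (g := fun y : ℝ => Real.arcsin (y/2))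
  · exact (Real.continuous_arcsin.comp (continuous_id.div_const 2)).continuousOn
  · intro x hx
    rw [show min (-2:ℝ) 2 = -2 by norm_num, show max (-2:ℝ) 2 = 2 by norm_num] at hx
    exact arcsin_deriv hx
  · intro x _; positivity

lemma II_mono {E : Type*} [NormedAddCommGroup E] {f : ℝ → E} (C : ℝ)
    (hm : AEStronglyMeasurable f (volume.restrict (Set.uIoc (-2:ℝ) 2)))
    (hb : ∀ x ∈ Set.uIoc (-2:ℝ) 2, ‖f x‖ ≤ C * (Real.sqrt (4-x^2))⁻¹) :
    IntervalIntegrable f volume (-2) 2 := by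
  apply IntervalIntegrable.mono_fun (f := fun x : ℝ => C * (Real.sqrt (4-x^2))⁻¹)
    (int_inv_sqrt.const_mul C) hm
  filter_upwards [ae_restrict_mem measurableSet_uIoc] with x hx
  exact (hb x hx).trans (le_abs_self _)

lemma E1 : ∫ x in (-2:ℝ)..2, (Real.sqrt (4 - x^2))⁻¹ = Real.pi := by
  rw [integral_eq_sub_of_hasDeriv_right_of_le (by norm_num)
    ((Real.continuous_arcsin.comp (continuous_id.div_const 2)).continuousOn)
    (fun x hx => (arcsin_deriv hx).hasDerivWithinAt) int_inv_sqrt]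
  norm_num [Real.arcsin_one, Real.arcsin_neg_one]


lemma neg_sqrt_deriv {x : ℝ} (hx : x ∈ Set.Ioo (-2:ℝ) 2) :
    HasDerivAt (fun y : ℝ => -Real.sqrt (4 - y^2)) (x * (Real.sqrt (4 - x^2))⁻¹) x := by
  have h0 : (4 - x^2) ≠ 0 := by nlinarith [hx.1, hx.2]
  have hin : HasDerivAt (fun y : ℝ => 4 - y^2) (-(2*x)) x := by
    simpa using ((hasDerivAt_pow 2 x).const_sub 4)
  have := ((Real.hasDerivAt_sqrt h0).comp x hin).neg
  refine this.congr_deriv ?_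
  have hs := sqrt4_pos hx
  field_simp

lemma abs_le_two {x : ℝ} (hx : x ∈ Set.uIoc (-2:ℝ) 2) : |x| ≤ 2 := by
  rw [Set.uIoc_of_le (by norm_num : (-2:ℝ) ≤ 2)] at hx
  rw [abs_le]; exact ⟨hx.1.le, hx.2⟩

lemma int_x_inv_sqrt : IntervalIntegrable (fun x : ℝ => x * (Real.sqrt (4 - x^2))⁻¹) volume (-2) 2 := by
  apply II_mono 2
  · apply Measurable.aestronglyMeasurable
    fun_prop
  · intro x hx
    have h1 := abs_le_two hx
    rw [norm_mul, norm_inv, Real.norm_eq_abs, Real.norm_eq_abs,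
      _root_.abs_of_nonneg (Real.sqrt_nonneg _)]
    gcongr

lemma E2 : ∫ x in (-2:ℝ)..2, x * (Real.sqrt (4 - x^2))⁻¹ = 0 := by
  rw [integral_eq_sub_of_hasDeriv_right_of_le (by norm_num)
    (Continuous.continuousOn (by continuity)).neg
    (fun x hx => (neg_sqrt_deriv hx).hasDerivWithinAt) int_x_inv_sqrt]
  norm_num [show (4:ℝ) - 2^2 = 0 by norm_num]

section T3
variable {z : ℂ}

lemma xz_norm (hz : 0 < z.im) (x : ℝ) : z.im ≤ ‖(x:ℂ) - z‖ := by
  have h := Complex.abs_im_le_norm ((x:ℂ) - z)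
  have h2 : ((x:ℂ) - z).im = -z.im := by simp
  rw [h2, abs_neg, abs_of_pos hz] at h
  exact h

lemma xz_ne (hz : 0 < z.im) (x : ℝ) : (x:ℂ) - z ≠ 0 := by
  intro h
  have := xz_norm hz x
  rw [h] at this
  simp only [norm_zero] at this
  linarith

/-- csqrt as complex -/
noncomputable def csq (x : ℝ) : ℂ := ((Real.sqrt (4 - x^2) : ℝ) : ℂ)

noncomputable def Afun (z : ℂ) : ℂ := ∫ x in (-2:ℝ)..2, (csq x)⁻¹ * ((x:ℂ)-z)⁻¹
noncomputable def Sfun (z : ℂ) : ℂ := ∫ x in (-2:ℝ)..2, csq x * ((x:ℂ)-z)⁻¹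
noncomputable def Dfun (z : ℂ) : ℂ := ∫ x in (-2:ℝ)..2, csq x * ((x:ℂ)-z)⁻¹^2

lemma norm_xz_inv_le (hz : 0 < z.im) (x : ℝ) : ‖((x:ℂ)-z)⁻¹‖ ≤ (z.im)⁻¹ := by
  rw [norm_inv]
  apply inv_anti₀ hz
  exact xz_norm hz x

lemma Ia (hz : 0 < z.im) : IntervalIntegrable (fun x : ℝ => (csq x)⁻¹ * ((x:ℂ)-z)⁻¹) volume (-2) 2 := by
  apply II_mono (z.im)⁻¹
  · apply Measurable.aestronglyMeasurable; unfold csq; fun_prop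
  · intro x _
    rw [norm_mul]
    calc ‖(csq x)⁻¹‖ * ‖((x:ℂ)-z)⁻¹‖ ≤ ‖(csq x)⁻¹‖ * (z.im)⁻¹ := by
          apply mul_le_mul_of_nonneg_left (norm_xz_inv_le hz x) (norm_nonneg _)
      _ = (z.im)⁻¹ * (Real.sqrt (4-x^2))⁻¹ := by
          rw [mul_comm, norm_inv]
          congr 1
          simp [csq, Complex.norm_real, _root_.abs_of_nonneg (Real.sqrt_nonneg _)]

lemma Ib (hz : 0 < z.im) : IntervalIntegrable (fun x : ℝ => (x:ℂ) * (csq x)⁻¹ * ((x:ℂ)-z)⁻¹) volume (-2) 2 := by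
  apply II_mono (2 * (z.im)⁻¹)
  · apply Measurable.aestronglyMeasurable; unfold csq; fun_prop
  · intro x hx
    rw [norm_mul, norm_mul]
    have h1 : ‖(x:ℂ)‖ ≤ 2 := by simpa using abs_le_two hx
    have h2 : ‖(csq x)⁻¹‖ = (Real.sqrt (4-x^2))⁻¹ := by
      rw [norm_inv]; congr 1
      simp [csq, Complex.norm_real, _root_.abs_of_nonneg (Real.sqrt_nonneg _)]
    have h3 := norm_xz_inv_le hz x
    calc ‖(x:ℂ)‖ * ‖(csq x)⁻¹‖ * ‖((x:ℂ)-z)⁻¹‖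
        ≤ 2 * (Real.sqrt (4-x^2))⁻¹ * (z.im)⁻¹ := by
          apply mul_le_mul _ h3 (norm_nonneg _) (by positivity)
          rw [h2]
          apply mul_le_mul_of_nonneg_right h1 (by positivity)
      _ = 2 * (z.im)⁻¹ * (Real.sqrt (4-x^2))⁻¹ := by ring

lemma cont_csq : Continuous csq := by
  unfold csq
  fun_prop

lemma cont_xz (hz : 0 < z.im) : Continuous (fun x : ℝ => ((x:ℂ)-z)⁻¹) := by
  apply Continuous.inv₀ (by fun_prop)
  exact fun x => xz_ne hz x

lemma Ic (hz : 0 < z.im) : IntervalIntegrable (fun x : ℝ => csq x * ((x:ℂ)-z)⁻¹) volume (-2) 2 :=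
  (cont_csq.mul (cont_xz hz)).intervalIntegrable _ _

lemma Isq2 (hz : 0 < z.im) : IntervalIntegrable (fun x : ℝ => csq x * ((x:ℂ)-z)⁻¹^2) volume (-2) 2 :=
  (cont_csq.mul ((cont_xz hz).pow 2)).intervalIntegrable _ _

lemma E1c : ∫ x in (-2:ℝ)..2, (csq x)⁻¹ = (Real.pi : ℂ) := by
  have : ∀ x : ℝ, (csq x)⁻¹ = (((Real.sqrt (4 - x^2))⁻¹ : ℝ) : ℂ) := by
    intro x; simp [csq]
  simp_rw [this]
  rw [intervalIntegral.integral_ofReal, E1]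

lemma E2c : ∫ x in (-2:ℝ)..2, (x:ℂ) * (csq x)⁻¹ = 0 := by
  have : ∀ x : ℝ, (x:ℂ) * (csq x)⁻¹ = (((x * (Real.sqrt (4 - x^2))⁻¹ : ℝ)) : ℂ) := by
    intro x; simp [csq]
  simp_rw [this]
  rw [intervalIntegral.integral_ofReal, E2]
  simp

end T3

section T4
variable {z : ℂ}

lemma Ii : IntervalIntegrable (fun x : ℝ => (csq x)⁻¹) volume (-2) 2 := by
  apply II_mono 1
  · apply Measurable.aestronglyMeasurable; unfold csq; fun_prop
  · intro x _
    rw [norm_inv, one_mul]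
    apply le_of_eq
    congr 1
    simp [csq, Complex.norm_real, _root_.abs_of_nonneg (Real.sqrt_nonneg _)]

lemma Ixi : IntervalIntegrable (fun x : ℝ => (x:ℂ) * (csq x)⁻¹) volume (-2) 2 := by
  apply II_mono 2
  · apply Measurable.aestronglyMeasurable; unfold csq; fun_prop
  · intro x hx
    rw [norm_mul]
    have h1 : ‖(x:ℂ)‖ ≤ 2 := by simpa using abs_le_two hx
    have h2 : ‖(csq x)⁻¹‖ = (Real.sqrt (4-x^2))⁻¹ := by
      rw [norm_inv]; congr 1
      simp [csq, Complex.norm_real, _root_.abs_of_nonneg (Real.sqrt_nonneg _)]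
    rw [h2]
    apply mul_le_mul_of_nonneg_right h1 (by positivity)

lemma csq_sq {x : ℝ} (hx : x ∈ Set.uIcc (-2:ℝ) 2) : csq x ^ 2 = (4:ℂ) - (x:ℂ)^2 := by
  rw [Set.uIcc_of_le (by norm_num : (-2:ℝ) ≤ 2)] at hx
  have h : (0:ℝ) ≤ 4 - x^2 := by nlinarith [hx.1, hx.2]
  unfold csq
  rw [← Complex.ofReal_pow, Real.sq_sqrt h]
  push_cast
  ring

lemma R1 (hz : 0 < z.im) : Sfun z = ((4:ℂ) - z^2) * Afun z - Real.pi * z := by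
  have hpt : ∀ x ∈ Set.uIcc (-2:ℝ) 2,
      csq x * ((x:ℂ)-z)⁻¹
        = ((4:ℂ)-z^2) * ((csq x)⁻¹ * ((x:ℂ)-z)⁻¹) - ((x:ℂ) * (csq x)⁻¹ + z * (csq x)⁻¹) := by
    intro x hx
    by_cases h : csq x = 0
    · simp [h]
    · have hu2 := csq_sq hx
      have hxz := xz_ne hz x
      field_simp
      linear_combination hu2
  rw [Sfun, intervalIntegral.integral_congr hpt,
    intervalIntegral.integral_sub (((Ia hz).const_mul ((4:ℂ) - z^2))) (Ixi.add (Ii.const_mul z)),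
    intervalIntegral.integral_const_mul,
    intervalIntegral.integral_add Ixi (Ii.const_mul z),
    intervalIntegral.integral_const_mul, E2c, E1c]
  rw [← Afun]
  ring

lemma deriv_csq {x : ℝ} (hx : x ∈ Set.Ioo (-2:ℝ) 2) :
    HasDerivAt (fun y : ℝ => csq y) (-((x:ℂ) * (csq x)⁻¹)) x := by
  have h : HasDerivAt (fun y : ℝ => Real.sqrt (4 - y^2)) (-(x * (Real.sqrt (4-x^2))⁻¹)) x := by
    have := (neg_sqrt_deriv hx).neg
    simpa [Pi.neg_def] using this
  have := h.ofReal_comp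
  refine this.congr_deriv ?_
  unfold csq
  push_cast
  ring

lemma deriv_xzinv (hz : 0 < z.im) (x : ℝ) :
    HasDerivAt (fun y : ℝ => ((y:ℂ)-z)⁻¹) (-1/((x:ℂ)-z)^2) x := by
  have h1 : HasDerivAt (fun w : ℂ => (w - z)⁻¹) (-1/((x:ℂ)-z)^2) ((x:ℝ):ℂ) := by
    have := ((hasDerivAt_id ((x:ℝ):ℂ)).sub_const z).inv (xz_ne hz x)
    simpa [Pi.inv_def] using this
  exact h1.comp_ofReal

lemma F_deriv (hz : 0 < z.im) {x : ℝ} (hx : x ∈ Set.Ioo (-2:ℝ) 2) :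
    HasDerivAt (fun y : ℝ => csq y * ((y:ℂ)-z)⁻¹)
      (-((x:ℂ) * (csq x)⁻¹ * ((x:ℂ)-z)⁻¹) - csq x * ((x:ℂ)-z)⁻¹^2) x := by
  have := (deriv_csq hx).mul (deriv_xzinv hz x)
  refine this.congr_deriv ?_
  rw [inv_pow]
  first
    | (field_simp; ring)
    | field_simp

lemma key_IBP (hz : 0 < z.im) :
    ∫ x in (-2:ℝ)..2, (-((x:ℂ) * (csq x)⁻¹ * ((x:ℂ)-z)⁻¹) - csq x * ((x:ℂ)-z)⁻¹^2) = 0 := by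
  have := integral_eq_sub_of_hasDeriv_right_of_le (by norm_num : (-2:ℝ) ≤ 2)
    ((cont_csq.mul (cont_xz hz)).continuousOn)
    (f' := fun x => -((x:ℂ) * (csq x)⁻¹ * ((x:ℂ)-z)⁻¹) - csq x * ((x:ℂ)-z)⁻¹^2)
    (fun x hx => (F_deriv hz hx).hasDerivWithinAt)
    (by simpa using ((Ib hz).neg).sub (Isq2 hz))
  rw [this]
  norm_num [csq, show (4:ℝ) - 2^2 = 0 by norm_num]

lemma split_x (hz : 0 < z.im) :
    ∫ x in (-2:ℝ)..2, (x:ℂ) * (csq x)⁻¹ * ((x:ℂ)-z)⁻¹ = Real.pi + z * Afun z := by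
  have hpt : ∀ x ∈ Set.uIcc (-2:ℝ) 2,
      (x:ℂ) * (csq x)⁻¹ * ((x:ℂ)-z)⁻¹ = (csq x)⁻¹ + z * ((csq x)⁻¹ * ((x:ℂ)-z)⁻¹) := by
    intro x _
    have hxz := xz_ne hz x
    by_cases h : csq x = 0
    · simp [h]
    · field_simp; ring
  rw [intervalIntegral.integral_congr hpt,
    intervalIntegral.integral_add Ii ((Ia hz).const_mul z),
    intervalIntegral.integral_const_mul, E1c, ← Afun]

lemma R2 (hz : 0 < z.im) : Dfun z = -(Real.pi + z * Afun z) := by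
  have h := key_IBP hz
  rw [intervalIntegral.integral_sub (by simpa [Pi.neg_def] using (Ib hz).neg) (Isq2 hz),
    intervalIntegral.integral_neg, split_x hz] at h
  have : Dfun z = ∫ x in (-2:ℝ)..2, csq x * ((x:ℂ)-z)⁻¹^2 := rfl
  rw [this]
  linear_combination -h

end T4

section T5
variable {z : ℂ}

lemma smul_integrand (z : ℂ) (f : ℝ → ℂ) (x : ℝ) :
    (Real.sqrt (4-x^2) / (2*Real.pi)) • f x
      = ((2*Real.pi)⁻¹ : ℝ) • (csq x * f x) := by
  rw [div_eq_mul_inv, mul_comm, ← smul_smul, Complex.real_smul (x := Real.sqrt (4-x^2))]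
  rfl

lemma scS_eq (z : ℂ) : scS z = ((2*Real.pi)⁻¹ : ℝ) • Sfun z := by
  unfold scS
  rw [sc_integral]
  rw [Sfun, ← intervalIntegral.integral_smul]
  apply intervalIntegral.integral_congr
  intro x _
  exact smul_integrand z (fun y => ((y:ℂ) - z)⁻¹) x

lemma sc_int_sq (z : ℂ) :
    (∫ x, ((x:ℂ) - z)⁻¹^2 ∂semicircle) = ((2*Real.pi)⁻¹ : ℝ) • Dfun z := by
  rw [sc_integral]
  rw [Dfun, ← intervalIntegral.integral_smul]
  apply intervalIntegral.integral_congr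
  intro x _
  exact smul_integrand z (fun y => ((y:ℂ) - z)⁻¹^2) x

lemma im_lower {w : ℂ} (hw : w ∈ Metric.ball z (z.im/2)) : z.im/2 ≤ w.im := by
  have h1 : |(w - z).im| ≤ ‖w - z‖ := Complex.abs_im_le_norm _
  have h2 : ‖w - z‖ < z.im/2 := by
    rw [← Complex.dist_eq]
    exact Metric.mem_ball.1 hw
  have h3 : (w - z).im = w.im - z.im := by simp
  rw [h3] at h1
  have := abs_le.1 (h1.trans h2.le)
  linarith [this.1]

lemma hasDeriv_scS (hz : 0 < z.im) :
    HasDerivAt scS (((2*Real.pi)⁻¹ : ℝ) • Dfun z) z := by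
  have key := hasDerivAt_integral_of_dominated_loc_of_deriv_le
    (F := fun (w : ℂ) (x : ℝ) => ((x:ℂ) - w)⁻¹)
    (F' := fun (w : ℂ) (x : ℝ) => ((x:ℂ) - w)⁻¹^2)
    (μ := semicircle) (x₀ := z)
    (bound := fun _ => ((z.im/2)⁻¹)^2)
    (Metric.ball_mem_nhds z (half_pos hz))
    (Filter.Eventually.of_forall (fun w => (Measurable.aestronglyMeasurable (by fun_prop))))
    ?_ (Measurable.aestronglyMeasurable (by fun_prop)) ?_ (integrable_const _) ?_
  · have h := key.2
    rwa [sc_int_sq z] at h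
  · -- integrability of (x - z)⁻¹
    apply Integrable.mono' (integrable_const ((z.im)⁻¹ : ℝ))
      (Measurable.aestronglyMeasurable (by fun_prop))
    apply Filter.Eventually.of_forall
    intro x
    exact norm_xz_inv_le hz x
  · -- bound
    apply Filter.Eventually.of_forall
    intro x w hw
    have him : 0 < w.im := lt_of_lt_of_le (half_pos hz) (im_lower hw)
    rw [norm_pow]
    have h1 : ‖((x:ℂ) - w)⁻¹‖ ≤ (w.im)⁻¹ := norm_xz_inv_le him x
    have h2 : (w.im)⁻¹ ≤ (z.im/2)⁻¹ := by
      apply inv_anti₀ (half_pos hz) (im_lower hw)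
    have h3 : (0:ℝ) ≤ ‖((x:ℂ) - w)⁻¹‖ := norm_nonneg _
    exact pow_le_pow_left₀ h3 (h1.trans h2) 2
  · -- differentiability
    apply Filter.Eventually.of_forall
    intro x w hw
    have him : 0 < w.im := lt_of_lt_of_le (half_pos hz) (im_lower hw)
    have h1 : HasDerivAt (fun w : ℂ => (x:ℂ) - w) (-1) w := by
      simpa using (hasDerivAt_id w).const_sub (x:ℂ)
    have := h1.inv (xz_ne him x)
    refine this.congr_deriv ?_
    show - -1 / (↑x - w) ^ 2 = ((x:ℂ) - w)⁻¹ ^ 2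
    rw [inv_pow]
    ring

lemma z2_ne (hz : 0 < z.im) : z^2 - 4 ≠ 0 := by
  intro h
  have : (z - 2) * (z + 2) = 0 := by linear_combination h
  rcases mul_eq_zero.1 this with h' | h'
  · have : z = 2 := by linear_combination h'
    rw [this] at hz; norm_num at hz
  · have : z = -2 := by linear_combination h'
    rw [this] at hz; norm_num at hz

lemma D_formula (hz : 0 < z.im) :
    Dfun z = (4*Real.pi + z * Sfun z) / (z^2 - 4) := by
  have h4 : (4:ℂ) - z^2 ≠ 0 := fun h => z2_ne hz (by linear_combination -h)
  have hA : Afun z = (Sfun z + Real.pi*z)/((4:ℂ) - z^2) := by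
    field_simp
    linear_combination -(R1 hz)
  rw [R2 hz, hA]
  have h4' := z2_ne hz
  field_simp
  ring

lemma deriv_scS (hz : 0 < z.im) :
    HasDerivAt scS ((2 + z * scS z) / (z^2 - 4)) z := by
  have h := hasDeriv_scS hz
  convert h using 1
  rw [scS_eq z, D_formula hz]
  have h4 := z2_ne hz
  have hpi : (Real.pi : ℂ) ≠ 0 := by
    simpa using Real.pi_ne_zero
  rw [Complex.real_smul, Complex.real_smul]
  push_cast
  field_simp
  ring

end T5

section T6

noncomputable def hfun : ℂ → ℂ := fun z => (scS z^2 + z * scS z + 1) / (z^2 - 4)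

lemma hasDeriv_hfun {z : ℂ} (hz : 0 < z.im) : HasDerivAt hfun 0 z := by
  have hs := deriv_scS hz
  set d := (2 + z * scS z) / (z^2 - 4) with hd
  have h1 : HasDerivAt (fun w => scS w ^ 2) (2 * scS z * d) z := by
    have := hs.pow 2
    refine this.congr_deriv ?_
    push_cast
    ring
  have h2 : HasDerivAt (fun w => w * scS w) (1 * scS z + z * d) z := (hasDerivAt_id z).mul hs
  have hnum : HasDerivAt (fun w => scS w^2 + w * scS w + 1)
      (2 * scS z * d + (1 * scS z + z * d)) z := (h1.add h2).add_const 1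
  have hden : HasDerivAt (fun w : ℂ => w^2 - 4) (2 * z) z := by
    have := (hasDerivAt_pow 2 z).sub_const 4
    refine this.congr_deriv ?_
    push_cast
    ring
  have h4 := z2_ne hz
  have hdiv := hnum.div hden h4
  have : hfun = fun w => (scS w^2 + w * scS w + 1) / (w^2 - 4) := rfl
  rw [this]
  refine hdiv.congr_deriv ?_
  rw [hd]
  field_simp
  ring

lemma hfun_const {z w : ℂ} (hz : 0 < z.im) (hw : 0 < w.im) : hfun z = hfun w := by
  have hU : IsOpen {c : ℂ | 0 < c.im} := isOpen_lt continuous_const Complex.continuous_im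
  apply Convex.is_const_of_fderivWithin_eq_zero (𝕜 := ℂ)
    (convex_halfSpace_im_gt (r := 0)) ?_ ?_ hz hw
  · intro c hc
    exact ((hasDeriv_hfun hc).differentiableAt).differentiableWithinAt
  · intro c hc
    rw [fderivWithin_of_isOpen hU hc,
      (hasDerivAt_iff_hasFDerivAt.1 (hasDeriv_hfun hc)).fderiv]
    exact ContinuousLinearMap.ext fun v => by simp

lemma norm_scS_le {z : ℂ} (hz : 0 < z.im) :
    ‖scS z‖ ≤ (z.im)⁻¹ * (semicircle Set.univ).toReal := by
  unfold scS
  apply MeasureTheory.norm_integral_le_of_norm_le_const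
  exact Filter.Eventually.of_forall (fun x => norm_xz_inv_le hz x)

lemma hfun_zero {z : ℂ} (hz : 0 < z.im) : hfun z = 0 := by
  set m := (semicircle Set.univ).toReal with hm
  have hm0 : (0:ℝ) ≤ m := ENNReal.toReal_nonneg
  have him : ∀ n : ℕ, 1 ≤ n → 0 < (Complex.I * (n:ℂ)).im := by
    intro n hn
    simp only [Complex.mul_im, Complex.I_re, Complex.I_im, Complex.natCast_re,
      Complex.natCast_im, zero_mul, one_mul, mul_zero, add_zero, zero_add]
    exact_mod_cast Nat.lt_of_lt_of_le Nat.zero_lt_one hn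
  have hbound : ∀ n : ℕ, 1 ≤ n → ‖hfun (Complex.I * n)‖ ≤ (m^2 + m + 1) / n := by
    intro n hn
    have hn1 : (1:ℝ) ≤ (n:ℝ) := by exact_mod_cast hn
    have hn0 : (0:ℝ) < (n:ℝ) := by linarith
    have himn : (Complex.I * (n:ℂ)).im = (n:ℝ) := by
      simp [Complex.mul_im]
    have hs : ‖scS (Complex.I * n)‖ ≤ ((n:ℝ))⁻¹ * m := by
      have := norm_scS_le (him n hn)
      rwa [himn] at this
    have hsm : ‖scS (Complex.I * n)‖ ≤ m := by
      apply hs.trans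
      calc ((n:ℝ))⁻¹ * m ≤ 1 * m := by
            apply mul_le_mul_of_nonneg_right _ hm0
            rw [inv_le_one_iff₀]
            right; exact hn1
        _ = m := one_mul m
    have hnorm_z : ‖(Complex.I * (n:ℂ))‖ = (n:ℝ) := by
      simp
    have hden : (Complex.I * (n:ℂ))^2 - 4 = ((-( (n:ℝ)^2 + 4) : ℝ) : ℂ) := by
      push_cast
      rw [mul_pow, Complex.I_sq]
      ring
    have hden_norm : ‖(Complex.I * (n:ℂ))^2 - 4‖ = (n:ℝ)^2 + 4 := by
      rw [hden]
      simp only [Complex.norm_real, Real.norm_eq_abs]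
      rw [abs_neg, _root_.abs_of_nonneg (by positivity)]
    have hnum : ‖scS (Complex.I * n)^2 + (Complex.I * n) * scS (Complex.I * n) + 1‖
        ≤ m^2 + m + 1 := by
      apply (norm_add_le _ _).trans
      have h1 : ‖scS (Complex.I * n)^2 + (Complex.I * n) * scS (Complex.I * n)‖
          ≤ m^2 + m := by
        apply (norm_add_le _ _).trans
        apply add_le_add
        · rw [norm_pow]
          exact pow_le_pow_left₀ (norm_nonneg _) hsm 2
        · rw [norm_mul, hnorm_z]
          calc (n:ℝ) * ‖scS (Complex.I * n)‖ ≤ (n:ℝ) * (((n:ℝ))⁻¹ * m) := by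
                apply mul_le_mul_of_nonneg_left hs (by positivity)
            _ = m := by field_simp
      simpa using add_le_add h1 (le_refl (1:ℝ))
    show ‖(scS (Complex.I * n)^2 + (Complex.I * n) * scS (Complex.I * n) + 1)
        / ((Complex.I * (n:ℂ))^2 - 4)‖ ≤ (m^2 + m + 1) / n
    rw [norm_div, hden_norm]
    exact div_le_div₀ (by positivity) hnum hn0 (by nlinarith)
  have htend0 : Filter.Tendsto (fun n : ℕ => hfun (Complex.I * n)) Filter.atTop (nhds 0) := by
    apply squeeze_zero_norm' (a := fun n : ℕ => (m^2 + m + 1) / (n:ℝ))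
      (by rw [Filter.eventually_atTop]; exact ⟨1, fun n hn => hbound n hn⟩)
      (tendsto_const_div_atTop_nhds_zero_nat _)
  have htend1 : Filter.Tendsto (fun n : ℕ => hfun (Complex.I * n)) Filter.atTop (nhds (hfun z)) := by
    apply Filter.Tendsto.congr' _ tendsto_const_nhds
    rw [Filter.EventuallyEq, Filter.eventually_atTop]
    exact ⟨1, fun n hn => hfun_const hz (him n hn)⟩
  exact tendsto_nhds_unique htend1 htend0

lemma feq {z : ℂ} (hz : 0 < z.im) : scS z^2 + z * scS z + 1 = 0 := by
  have h := hfun_zero hz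
  unfold hfun at h
  exact (div_eq_zero_iff.1 h).resolve_right (z2_ne hz)

end T6


/-- analyticity and algebraic identities for the Stieltjes transform
of the semicircle law on the upper half plane. -/
theorem scS_differentiable_and_identity :
    (∀ z : ℂ, 0 < z.im → DifferentiableAt ℂ scS z) ∧
    ∀ z₁ z₂ : ℂ, 0 < z₁.im → 0 < z₂.im → z₁ ≠ z₂ →
      scS z₁ ≠ scS z₂ ∧ scS z₁ ^ 2 ≠ 1 ∧ scS z₂ ^ 2 ≠ 1 ∧ scS z₁ * scS z₂ ≠ 1 ∧
        deriv scS z₁ * deriv scS z₂ / (scS z₁ - scS z₂) ^ 2 - 1 / (z₁ - z₂) ^ 2 =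
          scS z₁ ^ 2 * scS z₂ ^ 2 /
            ((scS z₁ ^ 2 - 1) * (scS z₂ ^ 2 - 1) * (scS z₁ * scS z₂ - 1) ^ 2) := by
  have hsqn : ∀ z : ℂ, 0 < z.im → scS z^2 ≠ 1 := by
    intro z hz h
    have e := feq hz
    have h' : (scS z - 1) * (scS z + 1) = 0 := by linear_combination h
    rcases mul_eq_zero.1 h' with h'' | h''
    · have hs1 : scS z = 1 := by linear_combination h''
      rw [hs1] at e
      have hz2 : z = -2 := by linear_combination e
      rw [hz2] at hz; norm_num at hz
    · have hs1 : scS z = -1 := by linear_combination h''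
      rw [hs1] at e
      have hz2 : z = 2 := by linear_combination -e
      rw [hz2] at hz; norm_num at hz
  constructor
  · intro z hz
    exact (deriv_scS hz).differentiableAt
  · intro z₁ z₂ h1 h2 hne
    have e₁ := feq h1
    have e₂ := feq h2
    have hd₁' := (deriv_scS h1).deriv
    have hd₂' := (deriv_scS h2).deriv
    have hsq₁ := hsqn z₁ h1
    have hsq₂ := hsqn z₂ h2
    set s₁ := scS z₁ with hs₁def
    set s₂ := scS z₂ with hs₂def
    have hs₁0 : s₁ ≠ 0 := by
      intro h; rw [h] at e₁; simp at e₁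
    have hs₂0 : s₂ ≠ 0 := by
      intro h; rw [h] at e₂; simp at e₂
    have hz₁ : z₁ = -(s₁^2 + 1)/s₁ := by
      field_simp
      linear_combination e₁
    have hz₂ : z₂ = -(s₂^2 + 1)/s₂ := by
      field_simp
      linear_combination e₂
    have hss : s₁ ≠ s₂ := by
      intro h
      apply hne
      rw [hz₁, hz₂, h]
    have hprod : s₁ * s₂ ≠ 1 := by
      intro h
      apply hne
      have hs2 : s₂ = s₁⁻¹ := by
        field_simp
        linear_combination h
      rw [hz₁, hz₂, hs2]
      field_simp
      ring
    refine ⟨hss, hsq₁, hsq₂, hprod, ?_⟩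
    have ne5 : s₁^2 - 1 ≠ 0 := sub_ne_zero.2 hsq₁
    have ne6 : s₂^2 - 1 ≠ 0 := sub_ne_zero.2 hsq₂
    have ne3 : 1 - s₁^2 ≠ 0 := fun h => ne5 (by linear_combination -h)
    have ne4 : 1 - s₂^2 ≠ 0 := fun h => ne6 (by linear_combination -h)
    have hd₁ : deriv scS z₁ = s₁^2/(1 - s₁^2) := by
      rw [hd₁']
      have hf1 : z₁^2 - 4 = ((s₁^2-1)/s₁)^2 := by
        rw [hz₁]; field_simp; ring
      have hn1 : (2 + z₁ * s₁) = 1 - s₁^2 := by linear_combination e₁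
      rw [hf1, hn1]
      field_simp
      ring
    have hd₂ : deriv scS z₂ = s₂^2/(1 - s₂^2) := by
      rw [hd₂']
      have hf2 : z₂^2 - 4 = ((s₂^2-1)/s₂)^2 := by
        rw [hz₂]; field_simp; ring
      have hn2 : (2 + z₂ * s₂) = 1 - s₂^2 := by linear_combination e₂
      rw [hf2, hn2]
      field_simp
      ring
    have ne1 : s₁ - s₂ ≠ 0 := sub_ne_zero.2 hss
    have ne2 : s₁ * s₂ - 1 ≠ 0 := sub_ne_zero.2 hprod
    have hzz2 : (z₁ - z₂)^2 * (s₁ * s₂)^2 = (s₁ - s₂)^2 * (s₁ * s₂ - 1)^2 := by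
      rw [hz₁, hz₂]
      field_simp
      ring
    have hzne : z₁ - z₂ ≠ 0 := sub_ne_zero.2 hne
    have hinv : 1/(z₁ - z₂)^2 = (s₁ * s₂)^2/((s₁ - s₂)^2 * (s₁ * s₂ - 1)^2) := by
      rw [div_eq_div_iff (pow_ne_zero 2 hzne)
        (mul_ne_zero (pow_ne_zero 2 ne1) (pow_ne_zero 2 ne2))]
      linear_combination -hzz2
    rw [hd₁, hd₂, hinv]
    field_simp
    ring

end
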